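/- Let K be an algebraically closed field, complete with respect to a nontrivial non-Archimedean absolute value ‖·‖. Let Λ ⊆ K be an open ball and let h : Λ → K be given by a power series centered at the center of Λ converging at every point of Λ. If h(λ) ≠ 0 for all λ ∈ Λ, then ‖h(λ_1)‖ = ‖h(λ_2)‖ for all λ_1, λ_2 ∈ Λ, i.e. a nonvanishing analytic function on an open ball has constant absolute value. -/

import Mathlib

open Polynomial IsUltrametricDist Finset Filter

set_option linter.unusedSectionVars false
set_option maxHeartbeats 1000000

section NVZAux
variable {K : Type*} [NontriviallyNormedField K] [IsUltrametricDist K]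

/-- `‖x^n - y^n‖ ≤ ‖x - y‖` on the unit ball. -/
lemma NVZ.norm_pow_sub_pow_le {x y : K} (hx : ‖x‖ ≤ 1) (hy : ‖y‖ ≤ 1) (n : ℕ) :
    ‖x ^ n - y ^ n‖ ≤ ‖x - y‖ := by
  induction n with
  | zero => simp
  | succ n ih =>
    have hxy : x ^ (n+1) - y ^ (n+1) = x ^ n * (x - y) + y * (x ^ n - y ^ n) := by ring
    rw [hxy]
    refine (norm_add_le_max _ _).trans (max_le ?_ ?_)
    · rw [norm_mul]
      calc ‖x ^ n‖ * ‖x - y‖ ≤ 1 * ‖x - y‖ := by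
            exact mul_le_mul_of_nonneg_right (by
              rw [norm_pow]; exact pow_le_one₀ (norm_nonneg x) hx) (norm_nonneg _)
        _ = ‖x - y‖ := one_mul _
    · rw [norm_mul]
      calc ‖y‖ * ‖x ^ n - y ^ n‖ ≤ 1 * ‖x - y‖ :=
            mul_le_mul hy ih (norm_nonneg _) zero_le_one
        _ = ‖x - y‖ := one_mul _

/-- lower bound on products of norms. -/
lemma NVZ.pow_le_prod_map_norm {t : Multiset K} {β : ℝ} (hβ : 0 ≤ β)
    (h : ∀ w ∈ t, β ≤ ‖w‖) : β ^ (Multiset.card t) ≤ (t.map (fun w => ‖w‖)).prod := by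
  induction t using Multiset.induction_on with
  | empty => simp
  | cons a s ih =>
    simp only [Multiset.card_cons, Multiset.map_cons, Multiset.prod_cons, pow_succ']
    exact mul_le_mul (h a (Multiset.mem_cons_self a s))
      (ih (fun w hw => h w (Multiset.mem_cons_of_mem hw)))
      (pow_nonneg hβ _) (norm_nonneg _)

/-- minimal-norm element of a nonempty multiset. -/
lemma NVZ.exists_min_norm {s : Multiset K} (hs : s ≠ 0) :
    ∃ w ∈ s, ∀ v ∈ s, ‖w‖ ≤ ‖v‖ := by
  induction s using Multiset.induction_on with
  | empty => exact absurd rfl hs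
  | cons a t ih =>
    rcases eq_or_ne t 0 with rfl | ht
    · exact ⟨a, Multiset.mem_cons_self a 0, by simp⟩
    · obtain ⟨w, hw, hmin⟩ := ih ht
      rcases le_total ‖w‖ ‖a‖ with hc | hc
      · exact ⟨w, Multiset.mem_cons_of_mem hw, fun v hv => by
          rcases Multiset.mem_cons.mp hv with rfl | hv
          · exact hc
          · exact hmin v hv⟩
      · exact ⟨a, Multiset.mem_cons_self a t, fun v hv => by
          rcases Multiset.mem_cons.mp hv with rfl | hv
          · exact le_rfl
          · exact hc.trans (hmin v hv)⟩


section AlgClosed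
variable [IsAlgClosed K]

/-- Key root-location lemma. -/
lemma NVZ.exists_root_near (P : K[X]) (N : ℕ) (hN : 1 ≤ N) (hG : 0 < ‖P.coeff N‖)
    (hlt : ∀ k, N < k → ‖P.coeff k‖ < ‖P.coeff N‖)
    {a : K} (ha : ‖a‖ ≤ 1) (hPa : P.eval a ≠ 0) :
    ∃ z : K, P.eval z = 0 ∧ ‖z - a‖ ^ N * ‖P.coeff N‖ ≤ ‖P.eval a‖ := by
  classical
  set G := ‖P.coeff N‖ with hGdef
  set Q := taylor a P with hQdef
  -- Step 1 : ‖Q.coeff N‖ ≥ G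
  have hQN : G ≤ ‖Q.coeff N‖ := by
    have hEq : Q.coeff N = (hasseDeriv N P).eval a := taylor_coeff a P N
    set E := hasseDeriv N P with hE
    set R := ∑ i ∈ range E.natDegree, E.coeff (i+1) * a ^ (i+1) with hRdef
    have heval : E.eval a = R + E.coeff 0 * a ^ 0 := by
      rw [eval_eq_sum_range, Finset.sum_range_succ']
    have hE0 : E.coeff 0 * a ^ 0 = P.coeff N := by
      simp [hE, hasseDeriv_coeff]
    have hEcoeff : ∀ i : ℕ, ‖E.coeff (i+1) * a ^ (i+1)‖ < G := by
      intro i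
      rw [hE, hasseDeriv_coeff]
      calc ‖((i + 1 + N).choose N : K) * P.coeff (i + 1 + N) * a ^ (i+1)‖
          ≤ ‖((i + 1 + N).choose N : K)‖ * ‖P.coeff (i + 1 + N)‖ * ‖a ^ (i+1)‖ := by
            rw [norm_mul, norm_mul]
        _ ≤ 1 * ‖P.coeff (i + 1 + N)‖ * 1 := by
            refine mul_le_mul (mul_le_mul ?_ le_rfl (norm_nonneg _) zero_le_one) ?_
              (norm_nonneg _) (by positivity)
            · exact norm_natCast_le_one K _
            · rw [norm_pow]; exact pow_le_one₀ (norm_nonneg a) ha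
        _ = ‖P.coeff (i + 1 + N)‖ := by ring
        _ < G := hlt _ (by omega)
    have hR : ‖R‖ < G := by
      obtain ⟨i, -, hi⟩ := exists_norm_finset_sum_le (range E.natDegree)
        (fun i => E.coeff (i+1) * a ^ (i+1))
      exact lt_of_le_of_lt hi (hEcoeff i)
    have hPQ : P.coeff N = Q.coeff N + -R := by rw [hEq, heval, hE0]; ring
    have hle : G ≤ max ‖Q.coeff N‖ ‖R‖ := by
      rw [hGdef, hPQ]
      exact (norm_add_le_max _ _).trans (by rw [norm_neg])
    rcases le_max_iff.mp hle with h | h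
    · exact h
    · linarith
  have hQ0 : Q.coeff 0 = P.eval a := taylor_coeff_zero a P
  have hQNne : Q.coeff N ≠ 0 := by
    intro h0; rw [h0, norm_zero] at hQN; linarith
  have hsplit : Q.Splits := IsAlgClosed.splits Q
  set s := Q.roots with hs
  set D := Q.natDegree with hD
  have hcard : Multiset.card s = D := (splits_iff_card_roots).mp hsplit
  have hND : N ≤ D := le_natDegree_of_ne_zero hQNne
  have hsne : s ≠ 0 := by
    intro h0
    rw [h0] at hcard
    simp only [Multiset.card_zero] at hcard
    omega
  obtain ⟨w₀, hw₀, hwmin⟩ := NVZ.exists_min_norm hsne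
  set β := ‖w₀‖ with hβ
  have hβ0 : 0 ≤ β := norm_nonneg _
  -- Vieta at N
  have hVN : Q.coeff N = Q.leadingCoeff * (-1) ^ (D - N) * s.esymm (D - N) :=
    Polynomial.coeff_eq_esymm_roots_of_splits hsplit hND
  -- esymm bound
  have hesymm : ‖s.esymm (D - N)‖ * β ^ N ≤ (s.map (fun w => ‖w‖)).prod := by
    rw [Multiset.esymm]
    obtain ⟨t, htmem, htle⟩ := exists_norm_multiset_sum_le
      (Multiset.powersetCard (D - N) s) (f := Multiset.prod)
    have hpsne : Multiset.powersetCard (D - N) s ≠ 0 := by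
      rw [← Multiset.card_pos]
      rw [Multiset.card_powersetCard, hcard]
      exact Nat.choose_pos (Nat.sub_le _ _)
    obtain ⟨htsub, htcard⟩ := Multiset.mem_powersetCard.mp (htmem hpsne)
    have hprodsplit : (s.map (fun w => ‖w‖)).prod
        = (t.map (fun w => ‖w‖)).prod * ((s - t).map (fun w => ‖w‖)).prod := by
      conv_lhs => rw [← tsub_add_cancel_of_le htsub]
      rw [Multiset.map_add, Multiset.prod_add, mul_comm]
    have hcardst : Multiset.card (s - t) = N := by
      rw [Multiset.card_sub htsub, htcard, hcard]
      omega
    have hlower : β ^ N ≤ ((s - t).map (fun w => ‖w‖)).prod := by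
      rw [← hcardst]
      exact NVZ.pow_le_prod_map_norm hβ0
        (fun w hw => hwmin w (Multiset.mem_of_le (Multiset.sub_le_self s t) hw))
    have htprod : ‖t.prod‖ = (t.map (fun w => ‖w‖)).prod := by
      simpa using map_multiset_prod ((normHom : K →*₀ ℝ).toMonoidHom) t
    calc ‖(Multiset.map Multiset.prod (Multiset.powersetCard (D - N) s)).sum‖ * β ^ N
        ≤ ‖t.prod‖ * β ^ N := by
          exact mul_le_mul_of_nonneg_right htle (pow_nonneg hβ0 _)
      _ = (t.map (fun w => ‖w‖)).prod * β ^ N := by rw [htprod]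
      _ ≤ (t.map (fun w => ‖w‖)).prod * ((s - t).map (fun w => ‖w‖)).prod := by
          refine mul_le_mul_of_nonneg_left hlower ?_
          exact Multiset.prod_nonneg (by simp)
      _ = (s.map (fun w => ‖w‖)).prod := hprodsplit.symm
  -- norm of Q.coeff 0 as product over roots
  have hQ0norm : ‖Q.coeff 0‖ = ‖Q.leadingCoeff‖ * (s.map (fun w => ‖w‖)).prod := by
    have hfact : Q = C Q.leadingCoeff * (s.map (fun w => X - C w)).prod :=
      hsplit.eq_prod_roots
    have : Q.coeff 0 = Q.eval 0 := by simp [coeff_zero_eq_eval_zero]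
    rw [this]
    conv_lhs => rw [hfact]
    rw [eval_mul, eval_C, eval_multiset_prod, norm_mul]
    congr 1
    have hmm : Multiset.map (eval 0) (Multiset.map (fun w => X - C w) s)
        = s.map (fun w => -w) := by
      rw [Multiset.map_map]
      apply Multiset.map_congr rfl
      intro x _
      simp
    rw [hmm]
    have : ‖(s.map (fun w => -w)).prod‖
        = ((s.map (fun w => -w)).map (fun x => ‖x‖)).prod :=
      map_multiset_prod ((normHom : K →*₀ ℝ).toMonoidHom) _
    rw [this, Multiset.map_map]
    apply congrArg Multiset.prod
    apply Multiset.map_congr rfl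
    intro x _
    simp

  -- combine
  refine ⟨w₀ + a, ?_, ?_⟩
  · have hroot : Q.eval w₀ = 0 := isRoot_of_mem_roots hw₀
    rwa [hQdef, taylor_eval] at hroot
  · have hchain : ‖Q.coeff N‖ * β ^ N ≤ ‖Q.coeff 0‖ := by
      rw [hVN, hQ0norm, norm_mul, norm_mul, norm_pow, norm_neg, norm_one, one_pow, mul_one,
        mul_assoc]
      refine mul_le_mul_of_nonneg_left ?_ (norm_nonneg _)
      exact hesymm
    have h1 : ‖w₀ + a - a‖ = β := by simp [hβ]
    rw [h1, ← hQ0]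
    calc β ^ N * G ≤ β ^ N * ‖Q.coeff N‖ :=
          mul_le_mul_of_nonneg_left hQN (pow_nonneg hβ0 _)
      _ = ‖Q.coeff N‖ * β ^ N := mul_comm _ _
      _ ≤ ‖Q.coeff 0‖ := hchain


end AlgClosed

/-- value of the series at `0` is `c 0`. -/
lemma NVZ.g_zero {c : ℕ → K} {g : K → K}
    (hc : ∀ x : K, ‖x‖ ≤ 1 → HasSum (fun n => c n * x ^ n) (g x)) : g 0 = c 0 := by
  have h1 := hc 0 (by simp)
  have h2 : (fun n => c n * (0:K) ^ n) = fun n => if n = 0 then c 0 else 0 := by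
    funext n
    cases n with
    | zero => simp
    | succ n => simp
  rw [h2] at h1
  exact (h1.unique (hasSum_ite_eq 0 (c 0)))

/-- norm bound for values of the series. -/
lemma NVZ.norm_g_le {c : ℕ → K} {g : K → K}
    (hc : ∀ x : K, ‖x‖ ≤ 1 → HasSum (fun n => c n * x ^ n) (g x))
    {C : ℝ} (hC : 0 ≤ C) (hb : ∀ n, ‖c n‖ ≤ C) {x : K} (hx : ‖x‖ ≤ 1) : ‖g x‖ ≤ C := by
  rw [← (hc x hx).tsum_eq]
  refine norm_tsum_le_of_forall_le_of_nonneg hC ?_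
  intro n
  rw [norm_mul, norm_pow]
  calc ‖c n‖ * ‖x‖ ^ n ≤ C * 1 :=
        mul_le_mul (hb n) (pow_le_one₀ (norm_nonneg x) hx) (by positivity) hC
    _ = C := mul_one C

/-- Lipschitz bound on the closed unit ball. -/
lemma NVZ.norm_g_sub_g_le {c : ℕ → K} {g : K → K}
    (hc : ∀ x : K, ‖x‖ ≤ 1 → HasSum (fun n => c n * x ^ n) (g x))
    {C : ℝ} (hb : ∀ n, ‖c n‖ ≤ C) {x y : K} (hx : ‖x‖ ≤ 1) (hy : ‖y‖ ≤ 1) :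
    ‖g x - g y‖ ≤ C * ‖x - y‖ := by
  have hC : 0 ≤ C := le_trans (norm_nonneg _) (hb 0)
  have hsub := (hc x hx).sub (hc y hy)
  rw [← hsub.tsum_eq]
  refine norm_tsum_le_of_forall_le_of_nonneg (by positivity) ?_
  intro n
  have : c n * x ^ n - c n * y ^ n = c n * (x ^ n - y ^ n) := by ring
  rw [this, norm_mul]
  exact mul_le_mul (hb n) (NVZ.norm_pow_sub_pow_le hx hy n) (norm_nonneg _) hC

/-- The central lemma: a power series convergent on the closed unit ball which does not
vanish there has all higher coefficients strictly smaller than the constant one. -/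
lemma NVZ.coeff_lt [CompleteSpace K] [IsAlgClosed K] (c : ℕ → K) (g : K → K)
    (hc : ∀ x : K, ‖x‖ ≤ 1 → HasSum (fun n => c n * x ^ n) (g x))
    (hg : ∀ x : K, ‖x‖ ≤ 1 → g x ≠ 0) :
    ∀ j, 1 ≤ j → ‖c j‖ < ‖c 0‖ := by
  by_contra hcon
  push_neg at hcon
  obtain ⟨j, hj1, hjge⟩ := hcon
  have hc0 : c 0 ≠ 0 := by rw [← NVZ.g_zero hc]; exact hg 0 (by simp)
  have hc0pos : 0 < ‖c 0‖ := norm_pos_iff.mpr hc0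
  -- coefficients tend to zero
  have htend : Tendsto (fun n => ‖c n‖) atTop (nhds 0) := by
    have hsummable := (hc 1 (by simp)).summable
    have := hsummable.tendsto_atTop_zero
    have h1 : (fun n => c n * (1:K) ^ n) = c := by funext n; simp
    rw [h1] at this
    exact (tendsto_zero_iff_norm_tendsto_zero).mp this
  -- choose M beyond which norms are < ‖c 0‖
  obtain ⟨M, hM⟩ := (Metric.tendsto_atTop.mp htend (‖c 0‖) hc0pos)
  have hM' : ∀ n, M ≤ n → ‖c n‖ < ‖c 0‖ := by
    intro n hn
    have := hM n hn
    rw [Real.dist_eq, sub_zero, abs_of_nonneg (norm_nonneg _)] at this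
    exact this
  -- the finite window
  set L := max M j + 1 with hL
  set T := (Finset.range L).filter (fun n => ‖c 0‖ ≤ ‖c n‖) with hT
  have h0T : 0 ∈ T := by
    simp only [hT, Finset.mem_filter, Finset.mem_range]
    exact ⟨by omega, le_rfl⟩
  have hjT : j ∈ T := by
    simp only [hT, Finset.mem_filter, Finset.mem_range]
    exact ⟨by omega, hjge⟩
  have hTne : T.Nonempty := ⟨0, h0T⟩
  set G := T.sup' hTne (fun n => ‖c n‖) with hG
  have hc0G : ‖c 0‖ ≤ G := Finset.le_sup' (fun n => ‖c n‖) h0T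
  have hGpos : 0 < G := lt_of_lt_of_le hc0pos hc0G
  set T' := T.filter (fun n => ‖c n‖ = G) with hT'
  have hT'ne : T'.Nonempty := by
    obtain ⟨i, hiT, hiG⟩ := Finset.exists_mem_eq_sup' hTne (fun n => ‖c n‖)
    exact ⟨i, by simp only [hT', Finset.mem_filter]; exact ⟨hiT, hiG.symm⟩⟩
  set N := T'.max' hT'ne with hN
  have hNT' : N ∈ T' := T'.max'_mem hT'ne
  have hNG : ‖c N‖ = G := (Finset.mem_filter.mp hNT').2
  have hTsub : ∀ k ∈ T, ‖c k‖ ≤ G := fun k hk => Finset.le_sup' (fun n => ‖c n‖) hk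
  have hlt : ∀ k, N < k → ‖c k‖ < G := by
    intro k hk
    by_cases hkL : k < L
    · by_cases hk0 : ‖c 0‖ ≤ ‖c k‖
      · have hkT : k ∈ T := by
          simp only [hT, Finset.mem_filter, Finset.mem_range]; exact ⟨hkL, hk0⟩
        rcases lt_or_eq_of_le (hTsub k hkT) with h | h
        · exact h
        · exfalso
          have : k ∈ T' := by simp only [hT', Finset.mem_filter]; exact ⟨hkT, h⟩
          exact absurd (T'.le_max' k this) (by omega)
      · push_neg at hk0; exact lt_of_lt_of_le hk0 hc0G
    · push_neg at hkL
      exact lt_of_lt_of_le (hM' k (by omega)) hc0G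
  have hub : ∀ k, ‖c k‖ ≤ G := by
    intro k
    by_cases hkL : k < L
    · by_cases hk0 : ‖c 0‖ ≤ ‖c k‖
      · exact hTsub k (by simp only [hT, Finset.mem_filter, Finset.mem_range]; exact ⟨hkL, hk0⟩)
      · push_neg at hk0; linarith
    · push_neg at hkL
      exact le_of_lt (lt_of_lt_of_le (hM' k (by omega)) hc0G)
  have hN1 : 1 ≤ N := by
    by_contra hN0
    push_neg at hN0
    interval_cases N
    have hjG : ‖c j‖ = G := le_antisymm (hTsub j hjT) (by rw [← hNG]; exact hjge)
    have hjT' : j ∈ T' := by simp only [hT', Finset.mem_filter]; exact ⟨hjT, hjG⟩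
    have := T'.le_max' j hjT'
    omega
  -- Step lemma
  have hstep : ∀ a : K, ‖a‖ ≤ 1 → ∃ z : K,
      ‖z - a‖ ^ N * G ≤ ‖g a‖ ∧ ‖z‖ ≤ 1 ∧ ‖g z‖ ≤ ‖g a‖ / 2 := by
    intro a ha
    have hga : g a ≠ 0 := hg a ha
    have hδ : 0 < ‖g a‖ := norm_pos_iff.mpr hga
    set δ := ‖g a‖ with hδdef
    obtain ⟨M₂, hM₂⟩ := Metric.tendsto_atTop.mp htend (δ/2) (by positivity)
    have hM₂' : ∀ n, M₂ ≤ n → ‖c n‖ < δ/2 := by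
      intro n hn
      have := hM₂ n hn
      rwa [Real.dist_eq, sub_zero, abs_of_nonneg (norm_nonneg _)] at this
    set m := max N M₂ with hm
    set P : K[X] := ∑ i ∈ Finset.range (m+1), C (c i) * X ^ i with hP
    have hPcoeff : ∀ k, P.coeff k = if k ≤ m then c k else 0 := by
      intro k
      rw [hP, finset_sum_coeff]
      simp only [coeff_C_mul, coeff_X_pow, mul_ite, mul_one, mul_zero]
      rw [Finset.sum_ite_eq (Finset.range (m+1)) k c]
      simp [Nat.lt_succ_iff]
    have hPeval : ∀ x : K, P.eval x = ∑ i ∈ Finset.range (m+1), c i * x ^ i := by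
      intro x
      rw [hP, eval_finset_sum]
      simp
    have htail : ∀ x : K, ‖x‖ ≤ 1 → ‖g x - P.eval x‖ ≤ δ/2 := by
      intro x hx
      have h1 : HasSum (fun n => c (n + (m+1)) * x ^ (n + (m+1))) (g x - P.eval x) := by
        refine (hasSum_nat_add_iff (f := fun n => c n * x ^ n) (m+1)).mpr ?_
        rw [hPeval x]
        simpa using hc x hx
      rw [← h1.tsum_eq]
      refine norm_tsum_le_of_forall_le_of_nonneg (by positivity) ?_
      intro n
      rw [norm_mul, norm_pow]
      calc ‖c (n + (m+1))‖ * ‖x‖ ^ (n + (m+1)) ≤ (δ/2) * 1 := by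
            refine mul_le_mul ?_ (pow_le_one₀ (norm_nonneg _) hx) (by positivity) (by positivity)
            exact (hM₂' _ (by omega)).le
        _ = δ/2 := mul_one _
    have htaila := htail a ha
    have hPa_le : ‖P.eval a‖ ≤ δ := by
      have : P.eval a = g a + -(g a - P.eval a) := by ring
      rw [this]
      refine (norm_add_le_max _ _).trans ?_
      rw [norm_neg]
      exact max_le le_rfl (by linarith)
    have hPa_ge : δ ≤ ‖P.eval a‖ := by
      have h2 : g a = P.eval a + (g a - P.eval a) := by ring
      have h3 : δ ≤ max ‖P.eval a‖ ‖g a - P.eval a‖ := by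
        rw [hδdef]
        conv_lhs => rw [h2]
        exact norm_add_le_max _ _
      rcases le_max_iff.mp h3 with h | h
      · exact h
      · linarith
    have hPa_ne : P.eval a ≠ 0 := by
      intro h0
      rw [h0, norm_zero] at hPa_ge
      linarith
    have hPcN : ‖P.coeff N‖ = G := by
      rw [hPcoeff N, if_pos (le_max_left N M₂)]
      exact hNG
    have hPlt : ∀ k, N < k → ‖P.coeff k‖ < ‖P.coeff N‖ := by
      intro k hk
      rw [hPcN, hPcoeff k]
      split
      · exact hlt k hk
      · rw [norm_zero]; exact hGpos
    obtain ⟨z, hz0, hzbound⟩ := NVZ.exists_root_near P N hN1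
      (by rw [hPcN]; exact hGpos) hPlt ha hPa_ne
    rw [hPcN] at hzbound
    have hzb : ‖z - a‖ ^ N * G ≤ δ := hzbound.trans hPa_le
    have hδG : δ ≤ G := NVZ.norm_g_le hc hGpos.le hub ha
    have hza : ‖z - a‖ ≤ 1 := by
      have h1 : ‖z - a‖ ^ N * G ≤ 1 * G := by rw [one_mul]; linarith
      have h2 : ‖z - a‖ ^ N ≤ 1 := le_of_mul_le_mul_right h1 hGpos
      exact (pow_le_one_iff_of_nonneg (norm_nonneg _) (by omega)).mp h2
    have hz1 : ‖z‖ ≤ 1 := by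
      have hzz : z = (z - a) + a := by ring
      rw [hzz]
      exact (norm_add_le_max _ _).trans (max_le hza ha)
    have hgz : ‖g z‖ ≤ δ/2 := by
      have := htail z hz1
      rwa [hz0, sub_zero] at this
    exact ⟨z, hzb, hz1, hgz⟩
  -- make the step unconditional and iterate
  have hstep' : ∀ a : K, ∃ z : K, ‖a‖ ≤ 1 →
      (‖z - a‖ ^ N * G ≤ ‖g a‖ ∧ ‖z‖ ≤ 1 ∧ ‖g z‖ ≤ ‖g a‖ / 2) := by
    intro a
    by_cases ha : ‖a‖ ≤ 1
    · obtain ⟨z, h⟩ := hstep a ha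
      exact ⟨z, fun _ => h⟩
    · exact ⟨0, fun h => absurd h ha⟩
  choose F hF using hstep'
  set u : ℕ → K := fun k => F^[k] 0 with hudef
  have hu0 : u 0 = 0 := rfl
  have husucc : ∀ k, u (k+1) = F (u k) := by
    intro k
    rw [hudef]
    exact Function.iterate_succ_apply' F k 0
  have hg0 : ‖g 0‖ = ‖c 0‖ := by rw [NVZ.g_zero hc]
  have hinv : ∀ k, ‖u k‖ ≤ 1 ∧ ‖g (u k)‖ ≤ (1/2)^k * ‖c 0‖ := by
    intro k
    induction k with
    | zero =>
      refine ⟨by rw [hu0]; simp, ?_⟩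
      rw [hu0, hg0]
      simp
    | succ k ih =>
      have hk1 := hF (u k) ih.1
      refine ⟨by rw [husucc k]; exact hk1.2.1, ?_⟩
      rw [husucc k]
      calc ‖g (F (u k))‖ ≤ ‖g (u k)‖ / 2 := hk1.2.2
        _ ≤ ((1/2)^k * ‖c 0‖) / 2 := by linarith [ih.2]
        _ = (1/2)^(k+1) * ‖c 0‖ := by ring
  have hinc : ∀ k, ‖u (k+1) - u k‖ ^ N ≤ (1/2 : ℝ)^k := by
    intro k
    have hk1 := hF (u k) (hinv k).1
    have h1 : ‖u (k+1) - u k‖ ^ N * G ≤ (1/2)^k * ‖c 0‖ := by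
      rw [husucc k]
      exact hk1.1.trans (hinv k).2
    have hcG : ‖c 0‖ ≤ G := hub 0
    have h2 : ‖u (k+1) - u k‖ ^ N * G ≤ (1/2 : ℝ)^k * G := by
      calc ‖u (k+1) - u k‖ ^ N * G ≤ (1/2)^k * ‖c 0‖ := h1
        _ ≤ (1/2)^k * G := by
            refine mul_le_mul_of_nonneg_left hcG (by positivity)
    exact le_of_mul_le_mul_right h2 hGpos
  set τ : ℝ := (1/2 : ℝ) ^ ((1:ℝ)/N) with hτdef
  have hNne : (N:ℝ) ≠ 0 := by positivity
  have hτ0 : 0 ≤ τ := Real.rpow_nonneg (by norm_num) _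
  have hτ1 : τ < 1 := Real.rpow_lt_one (by norm_num) (by norm_num) (by positivity)
  have hinc' : ∀ k, ‖u (k+1) - u k‖ ≤ τ ^ k := by
    intro k
    set e := ‖u (k+1) - u k‖ with he
    have h0 : (0:ℝ) ≤ e := norm_nonneg _
    have h1 : ((e ^ N : ℝ)) ^ ((1:ℝ)/N) ≤ ((1/2:ℝ)^k) ^ ((1:ℝ)/N) :=
      Real.rpow_le_rpow (by positivity) (hinc k) (by positivity)
    have h2 : ((e ^ N : ℝ)) ^ ((1:ℝ)/N) = e := by
      rw [← Real.rpow_natCast e N, ← Real.rpow_mul h0]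
      rw [mul_one_div, div_self hNne, Real.rpow_one]
    have h3 : (((1/2:ℝ)^k) : ℝ) ^ ((1:ℝ)/N) = τ ^ k := by
      rw [← Real.rpow_natCast (1/2 : ℝ) k, ← Real.rpow_mul (by norm_num),
        mul_comm, Real.rpow_mul (by norm_num), Real.rpow_natCast]
    rw [h2, h3] at h1
    exact h1
  have hdist : ∀ k, dist (u k) (u (k+1)) ≤ 1 * τ ^ k := by
    intro k
    rw [dist_eq_norm, norm_sub_rev, one_mul]
    exact hinc' k
  have hcauchy : CauchySeq u := cauchySeq_of_le_geometric τ 1 hτ1 hdist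
  obtain ⟨x, hx⟩ := cauchySeq_tendsto_of_complete hcauchy
  have hx1 : ‖x‖ ≤ 1 := by
    have hn : Tendsto (fun k => ‖u k‖) atTop (nhds ‖x‖) := hx.norm
    exact le_of_tendsto hn (Filter.Eventually.of_forall (fun k => (hinv k).1))
  have hgx : g x = 0 := by
    have hb : ∀ k, ‖g x‖ ≤ G * ‖x - u k‖ + (1/2)^k * ‖c 0‖ := by
      intro k
      have hgg : g x = (g x - g (u k)) + g (u k) := by ring
      calc ‖g x‖ = ‖(g x - g (u k)) + g (u k)‖ := by rw [← hgg]
        _ ≤ ‖g x - g (u k)‖ + ‖g (u k)‖ := norm_add_le _ _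
        _ ≤ G * ‖x - u k‖ + (1/2)^k * ‖c 0‖ :=
            add_le_add (NVZ.norm_g_sub_g_le hc hub hx1 (hinv k).1) (hinv k).2
    have hlim : Tendsto (fun k => G * ‖x - u k‖ + (1/2 : ℝ)^k * ‖c 0‖) atTop (nhds 0) := by
      have h1 : Tendsto (fun k => ‖x - u k‖) atTop (nhds 0) := by
        have := (tendsto_const_nhds (x := x) (f := atTop (α := ℕ))).sub hx
        rw [sub_self] at this
        simpa using this.norm
      have h2 : Tendsto (fun k : ℕ => (1/2 : ℝ)^k) atTop (nhds 0) :=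
        tendsto_pow_atTop_nhds_zero_of_lt_one (by norm_num) (by norm_num)
      have := (h1.const_mul G).add (h2.mul_const ‖c 0‖)
      simpa using this
    have hle0 : ‖g x‖ ≤ 0 := ge_of_tendsto hlim (Filter.Eventually.of_forall hb)
    exact norm_le_zero_iff.mp hle0
  exact hg x hx1 hgx


end NVZAux

/-- a nonvanishing analytic function (given by a convergent power series)
on an open ball over a complete algebraically closed non-Archimedean field has constant
absolute value. -/
theorem nonvanishing_constant_norm_ball
    {K : Type*} [NontriviallyNormedField K] [IsUltrametricDist K]
    [CompleteSpace K] [IsAlgClosed K]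
    (lam0 : K) (ρ : ℝ) (hρ : 0 < ρ) (h : K → K) (b : ℕ → K)
    (hps : ∀ lam : K, ‖lam - lam0‖ < ρ →
      HasSum (fun n : ℕ => b n * (lam - lam0) ^ n) (h lam))
    (hnz : ∀ lam : K, ‖lam - lam0‖ < ρ → h lam ≠ 0) :
    ∀ lam1 : K, ‖lam1 - lam0‖ < ρ → ∀ lam2 : K, ‖lam2 - lam0‖ < ρ →
      ‖h lam1‖ = ‖h lam2‖ := by
  have hlam0 : h lam0 = b 0 := by
    have h1 := hps lam0 (by simpa using hρ)
    have h2 : (fun n => b n * (lam0 - lam0) ^ n) = fun n => if n = 0 then b 0 else 0 := by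
      funext n
      cases n with
      | zero => simp
      | succ n => simp
    rw [h2] at h1
    exact h1.unique (hasSum_ite_eq 0 (b 0))
  have key : ∀ lam : K, ‖lam - lam0‖ < ρ → ‖h lam‖ = ‖b 0‖ := by
    intro lam hlam
    by_cases hu0 : lam - lam0 = 0
    · have : lam = lam0 := by
        have := sub_eq_zero.mp hu0; exact this
      rw [this, hlam0]
    · set u := lam - lam0 with hudef
      have hunorm : 0 < ‖u‖ := norm_pos_iff.mpr hu0
      set c : ℕ → K := fun n => b n * u ^ n with hcdef
      set g : K → K := fun x => h (lam0 + u * x) with hgdef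
      have hball : ∀ x : K, ‖x‖ ≤ 1 → ‖(lam0 + u * x) - lam0‖ < ρ := by
        intro x hx
        have : (lam0 + u * x) - lam0 = u * x := by ring
        rw [this, norm_mul]
        calc ‖u‖ * ‖x‖ ≤ ‖u‖ * 1 := mul_le_mul_of_nonneg_left hx (norm_nonneg _)
          _ = ‖u‖ := mul_one _
          _ < ρ := hlam
      have hc : ∀ x : K, ‖x‖ ≤ 1 → HasSum (fun n => c n * x ^ n) (g x) := by
        intro x hx
        have h1 := hps (lam0 + u * x) (hball x hx)
        have h2 : (fun n => b n * ((lam0 + u * x) - lam0) ^ n)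
            = fun n => c n * x ^ n := by
          funext n
          have : (lam0 + u * x) - lam0 = u * x := by ring
          rw [this, hcdef, mul_pow]
          ring
        rw [h2] at h1
        exact h1
      have hgnz : ∀ x : K, ‖x‖ ≤ 1 → g x ≠ 0 := by
        intro x hx
        exact hnz _ (hball x hx)
      have hcoeff := NVZ.coeff_lt c g hc hgnz
      -- ‖h lam‖ = ‖g 1‖ = ‖c 0‖ = ‖b 0‖
      have hc0 : c 0 = b 0 := by rw [hcdef]; simp
      have hc0pos : 0 < ‖c 0‖ := by
        rw [← NVZ.g_zero hc]
        exact norm_pos_iff.mpr (hgnz 0 (by simp))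
      have hg1 : g 1 = h lam := by
        rw [hgdef]
        simp only [mul_one]
        congr 1
        rw [hudef]; ring
      have hsum1 : HasSum c (g 1) := by
        have := hc 1 (by simp)
        simpa using this
      -- bound on the tail
      have htend : Tendsto (fun n => ‖c n‖) atTop (nhds 0) := by
        have hsummable := hsum1.summable
        have := hsummable.tendsto_atTop_zero
        exact (tendsto_zero_iff_norm_tendsto_zero).mp this
      obtain ⟨M, hM⟩ := Metric.tendsto_atTop.mp htend (‖c 0‖/2) (by positivity)
      have hM' : ∀ n, M ≤ n → ‖c n‖ < ‖c 0‖/2 := by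
        intro n hn
        have := hM n hn
        rwa [Real.dist_eq, sub_zero, abs_of_nonneg (norm_nonneg _)] at this
      set B := max ((Finset.range (M+1)).sup' ⟨0, Finset.mem_range.mpr (by omega)⟩
        (fun n => ‖c (n+1)‖)) (‖c 0‖/2) with hB
      have hBall : ∀ n : ℕ, ‖c (n+1)‖ ≤ B := by
        intro n
        by_cases hn : n < M + 1
        · exact le_max_of_le_left (Finset.le_sup' (fun n => ‖c (n+1)‖)
            (Finset.mem_range.mpr hn))
        · push_neg at hn
          exact le_max_of_le_right (hM' (n+1) (by omega)).le
      have hBlt : B < ‖c 0‖ := by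
        rw [hB]
        refine max_lt ?_ (by linarith)
        apply (Finset.sup'_lt_iff _).mpr
        intro i _
        exact hcoeff (i+1) (by omega)
      have htail : HasSum (fun n => c (n + 1)) (g 1 - c 0) := by
        refine (hasSum_nat_add_iff (f := c) 1).mpr ?_
        simpa using hsum1
      have htailnorm : ‖g 1 - c 0‖ ≤ B := by
        rw [← htail.tsum_eq]
        exact norm_tsum_le_of_forall_le_of_nonneg
          (le_trans (norm_nonneg _) (hBall 0)) hBall
      have hfinal : ‖g 1‖ = ‖c 0‖ := by
        have h1 : ‖g 1‖ ≤ ‖c 0‖ := by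
          have : g 1 = c 0 + (g 1 - c 0) := by ring
          rw [this]
          exact (norm_add_le_max _ _).trans (max_le le_rfl (by linarith))
        have h2 : ‖c 0‖ ≤ ‖g 1‖ := by
          have hcc : c 0 = g 1 + -(g 1 - c 0) := by ring
          have h3 : ‖c 0‖ ≤ max ‖g 1‖ ‖g 1 - c 0‖ := by
            conv_lhs => rw [hcc]
            exact (norm_add_le_max _ _).trans (by rw [norm_neg])
          rcases le_max_iff.mp h3 with hh | hh
          · exact hh
          · linarith
        linarith
      rw [← hg1, hfinal, hc0]
  intro lam1 h1 lam2 h2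
  rw [key lam1 h1, key lam2 h2]
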